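/- Let f₁, f₂ > 0 with f₁ ≠ f₂, s > 0, t₁, α, β real with β ≠ α f₁ t₁. Then there exists ε > 0 such that for every δ with |δ| < ε there exist unique τ and p ≥ 0 with p > 0 satisfying α δ + τ + p = s and β δ + f₁ t₁ τ + (1/2) f₁ τ² + f₁(t₁ + τ) p + (1/2) f₂ p² = f₁ t₁ s + (1/2) f₂ s², and (τ, p) depends continuously on δ with (τ, p) = (0, s) at δ = 0. -/
import Mathlib


/-- Main theorem of the mechanical lens: for all sufficiently small offsets δ
there is a unique pair (τ, p) with p > 0 solving the system, depending
continuously on δ, with (τ, p) = (0, s) at δ = 0. -/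
theorem mechanical_lens_main
    (α β s t₁ f₁ f₂ : ℝ) (hf₁ : 0 < f₁) (hf₂ : 0 < f₂) (hne : f₁ ≠ f₂)
    (hs : 0 < s) (htrans : β ≠ α * f₁ * t₁) :
    ∃ ε > 0, ∃ T P : ℝ → ℝ,
      ContinuousOn T (Set.Ioo (-ε) ε) ∧ ContinuousOn P (Set.Ioo (-ε) ε) ∧
      T 0 = 0 ∧ P 0 = s ∧
      ∀ δ ∈ Set.Ioo (-ε) ε,
        (0 < P δ ∧
         α * δ + T δ + P δ = s ∧
         β * δ + f₁ * t₁ * T δ + (1/2) * f₁ * (T δ)^2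
           + f₁ * (t₁ + T δ) * P δ + (1/2) * f₂ * (P δ)^2
           = f₁ * t₁ * s + (1/2) * f₂ * s^2) ∧
        ∀ τ p : ℝ, 0 < p →
          α * δ + τ + p = s →
          β * δ + f₁ * t₁ * τ + (1/2) * f₁ * τ^2
            + f₁ * (t₁ + τ) * p + (1/2) * f₂ * p^2
            = f₁ * t₁ * s + (1/2) * f₂ * s^2 →
          τ = T δ ∧ p = P δ := by
  have hc : f₂ - f₁ ≠ 0 := sub_ne_zero.mpr (Ne.symm hne)
  set Q : ℝ → ℝ := fun δ =>
    (2 * f₁ * t₁ * α * δ + f₂ * s ^ 2 - f₁ * (s - α * δ) ^ 2 - 2 * β * δ) / (f₂ - f₁)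
    with hQdef
  have hQcont : Continuous Q := by
    apply Continuous.div_const
    continuity
  have hQ0 : Q 0 = s ^ 2 := by
    simp only [hQdef]
    field_simp
    ring
  -- find ε with Q > 0 on the ball
  have hopen : IsOpen {δ : ℝ | 0 < Q δ} := isOpen_lt continuous_const hQcont
  have h0mem : (0 : ℝ) ∈ {δ : ℝ | 0 < Q δ} := by
    simp only [Set.mem_setOf_eq, hQ0]; positivity
  obtain ⟨ε, hε, hball⟩ := Metric.isOpen_iff.mp hopen 0 h0mem
  have hballIoo : Set.Ioo (-ε) ε ⊆ {δ : ℝ | 0 < Q δ} := by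
    rw [Real.ball_eq_Ioo] at hball
    simpa using hball
  set P : ℝ → ℝ := fun δ => Real.sqrt (Q δ) with hPdef
  set T : ℝ → ℝ := fun δ => s - α * δ - P δ with hTdef
  have hPcont : Continuous P := Real.continuous_sqrt.comp hQcont
  have hP0 : P 0 = s := by
    simp only [hPdef, hQ0]
    exact Real.sqrt_sq hs.le
  refine ⟨ε, hε, T, P, ?_, hPcont.continuousOn, ?_, hP0, ?_⟩
  · exact ((continuous_const.sub (continuous_const.mul continuous_id)).sub hPcont).continuousOn
  · simp [hTdef, hP0]
  · intro δ hδ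
    have hQpos : 0 < Q δ := hballIoo hδ
    have hPpos : 0 < P δ := Real.sqrt_pos.mpr hQpos
    have hP2 : P δ ^ 2 = Q δ := Real.sq_sqrt hQpos.le
    have hP2' : (f₂ - f₁) * P δ ^ 2
        = 2 * f₁ * t₁ * α * δ + f₂ * s ^ 2 - f₁ * (s - α * δ) ^ 2 - 2 * β * δ := by
      rw [hP2, hQdef]
      field_simp
    refine ⟨⟨hPpos, by simp [hTdef]; ring, ?_⟩, ?_⟩
    · simp only [hTdef]
      linear_combination (1/2) * hP2'
    · intro τ p hp h1 h2
      have hτ : τ = s - α * δ - p := by linarith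
      have hp2 : (f₂ - f₁) * p ^ 2
          = 2 * f₁ * t₁ * α * δ + f₂ * s ^ 2 - f₁ * (s - α * δ) ^ 2 - 2 * β * δ := by
        subst hτ
        linear_combination 2 * h2
      have hpp : p ^ 2 = P δ ^ 2 :=
        mul_left_cancel₀ hc (hp2.trans hP2'.symm)
      have hpP : p = P δ := by nlinarith [hpp, hPpos, hp]
      exact ⟨by simp [hTdef]; linarith, hpP⟩
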